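/- In the a-distinction Δ_a(M), two reachable states (q,S) and (r,R) satisfy (q,S) Γ_a (r,R) if and only if S = R, where Γ_a is the relation: (x,y) ∈ Γ_a iff every run ending in x has an a-indistinguishable run ending in y. -/

import Mathlib

/-- Subset-tracking transition relation of the a-distinction `Δₐ(M)`. -/
def deltaDist {Q P : Type*} (δ : Q → Q → Prop) (lab : Q → Set P) (Pa : Set P) :
    (Q × Set Q) → (Q × Set Q) → Prop := fun p p' =>
  δ p.1 p'.1 ∧ p'.2 = {r' | lab r' ∩ Pa = lab p'.1 ∩ Pa ∧ ∃ s' ∈ p.2, δ s' r'}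

lemma chain_concat_iff {α} {R : α → α → Prop} {x : α} :
    ∀ {a : α} {l : List α}, List.Chain R a (l ++ [x]) ↔
      List.Chain R a l ∧ R ((a :: l).getLast (List.cons_ne_nil _ _)) x := by
  intro a l
  induction l generalizing a with
  | nil => simp [List.Chain, List.isChain_singleton]
  | cons b l ih => simp only [List.Chain] at ih ⊢; simp [List.chain_cons, ih, List.getLast_cons, and_assoc]

lemma getLast_cons_concat {α} (a x : α) (l : List α) :
    (a :: (l ++ [x])).getLast (List.cons_ne_nil _ _) = x := by
  induction l generalizing a with
  | nil => rfl
  | cons b l ih => rw [List.cons_append, List.getLast_cons]; exact ih b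

section
variable {Q P : Type*} (δ : Q → Q → Prop) (q0 : Q) (lab : Q → Set P) (Pa : Set P)

/-- The subset component of the last state of a run of `Δₐ(M)` is exactly the set of
endpoints of observation-equivalent runs of `M`. -/
lemma dist_invariant : ∀ {ρ : List (Q × Set Q)},
    List.Chain (deltaDist δ lab Pa) (q0, {q0}) ρ →
    (((q0, ({q0} : Set Q)) :: ρ).getLast (List.cons_ne_nil _ _)).2 =
      {r | ∃ σ : List Q, List.Chain δ q0 σ ∧
        (q0 :: σ).map (fun s => lab s ∩ Pa)
          = (((q0, ({q0} : Set Q)) : Q × Set Q) :: ρ).map (fun p => lab p.1 ∩ Pa) ∧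
        (q0 :: σ).getLast (List.cons_ne_nil _ _) = r} := by
  intro ρ
  induction ρ using List.reverseRecOn with
  | nil =>
      intro _
      ext r
      simp only [List.getLast_singleton, Set.mem_setOf_eq, Set.mem_singleton_iff]
      constructor
      · rintro rfl; exact ⟨[], by simp [List.Chain.nil]⟩
      · rintro ⟨σ, hσ, hmap, hlast⟩
        have hlen : σ.length = 0 := by
          have := congrArg List.length hmap; simpa using this
        rw [List.length_eq_zero_iff] at hlen
        subst hlen
        simpa using hlast.symm
  | append_singleton l x ih =>
      intro hchain
      rw [chain_concat_iff] at hchain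
      obtain ⟨hc, hstep⟩ := hchain
      have hIH := ih hc
      obtain ⟨hδ, hX⟩ := hstep
      rw [getLast_cons_concat]
      rw [hX]
      ext r
      simp only [Set.mem_setOf_eq]
      constructor
      · rintro ⟨hobs, s', hs', hδs⟩
        rw [hIH] at hs'
        obtain ⟨σ, hσc, hσmap, hσlast⟩ := hs'
        refine ⟨σ ++ [r], ?_, ?_, ?_⟩
        · rw [chain_concat_iff]; exact ⟨hσc, hσlast ▸ hδs⟩
        · have h' := hσmap
          simp only [List.map_cons, List.cons.injEq] at h'
          simp [h'.2, hobs]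
        · exact getLast_cons_concat _ _ _
      · rintro ⟨σ, hσc, hσmap, hσlast⟩
        rcases List.eq_nil_or_concat σ with rfl | ⟨σ', y, hconcat⟩
        · exfalso; have := congrArg List.length hσmap; simp at this
        rw [List.concat_eq_append] at hconcat
        subst hconcat
        rw [chain_concat_iff] at hσc
        obtain ⟨hσ'c, hδy⟩ := hσc
        have hy : y = r := by
          rw [getLast_cons_concat] at hσlast; exact hσlast
        subst hy
        -- split the map equality
        have hmap2 : (q0 :: σ').map (fun s => lab s ∩ Pa) ++ [lab y ∩ Pa]
            = (((q0, ({q0} : Set Q)) : Q × Set Q) :: l).map (fun p => lab p.1 ∩ Pa)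
              ++ [lab x.1 ∩ Pa] := by
          have := hσmap
          rw [show q0 :: (σ' ++ [y]) = (q0 :: σ') ++ [y] by simp,
              show ((q0, ({q0} : Set Q)) : Q × Set Q) :: (l ++ [x])
                = (((q0, ({q0} : Set Q)) : Q × Set Q) :: l) ++ [x] by simp] at this
          simpa using this
        have hlen : ((q0 :: σ').map (fun s => lab s ∩ Pa)).length
            = ((((q0, ({q0} : Set Q)) : Q × Set Q) :: l).map (fun p => lab p.1 ∩ Pa)).length := by
          have := congrArg List.length hmap2; simpa using this
        obtain ⟨h1, h2⟩ := List.append_inj hmap2 hlen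
        have hobs : lab y ∩ Pa = lab x.1 ∩ Pa := by simpa using h2
        refine ⟨hobs, (q0 :: σ').getLast (List.cons_ne_nil _ _), ?_, hδy⟩
        rw [hIH]
        exact ⟨σ', hσ'c, h1, rfl⟩

end

lemma getLast_eq_of_eq {α} {l1 l2 : List α} (h : l1 = l2) (h1 : l1 ≠ []) :
    l1.getLast h1 = l2.getLast (h ▸ h1) := by subst h; rfl

lemma map_getLast_cons {α β} (f : α → β) (a : α) :
    ∀ (l : List α), (f a :: l.map f).getLast (List.cons_ne_nil _ _)
      = f ((a :: l).getLast (List.cons_ne_nil _ _)) := by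
  intro l
  induction l generalizing a with
  | nil => rfl
  | cons b l ih =>
      simp only [List.map_cons]
      rw [List.getLast_cons (by simp), List.getLast_cons (List.cons_ne_nil _ _)]
      exact ih b

section
variable {Q P : Type*} (δ : Q → Q → Prop) (q0 : Q) (lab : Q → Set P) (Pa : Set P)

lemma fst_mem_snd : ∀ {ρ : List (Q × Set Q)},
    List.Chain (deltaDist δ lab Pa) (q0, {q0}) ρ →
    ((((q0, ({q0} : Set Q)) :: ρ).getLast (List.cons_ne_nil _ _)).1 : Q) ∈
      (((q0, ({q0} : Set Q)) :: ρ).getLast (List.cons_ne_nil _ _)).2 := by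
  intro ρ
  induction ρ using List.reverseRecOn with
  | nil => intro _; simp
  | append_singleton l x ih =>
      intro hchain
      rw [chain_concat_iff] at hchain
      obtain ⟨hc, hδ, hX⟩ := hchain
      rw [getLast_cons_concat, hX]
      exact ⟨rfl, _, ih hc, hδ⟩

lemma lift_run : ∀ {σ : List Q}, List.Chain δ q0 σ →
    ∃ ρ : List (Q × Set Q), List.Chain (deltaDist δ lab Pa) (q0, {q0}) ρ ∧
      (((q0, ({q0} : Set Q)) : Q × Set Q) :: ρ).map Prod.fst = q0 :: σ := by
  intro σ
  induction σ using List.reverseRecOn with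
  | nil => intro _; exact ⟨[], List.Chain.nil, rfl⟩
  | append_singleton σ' s ih =>
      intro hchain
      rw [chain_concat_iff] at hchain
      obtain ⟨hc, hδ⟩ := hchain
      obtain ⟨ρ, hρc, hρf⟩ := ih hc
      set L := (((q0, ({q0} : Set Q)) : Q × Set Q) :: ρ).getLast (List.cons_ne_nil _ _) with hL
      have hL1 : L.1 = (q0 :: σ').getLast (List.cons_ne_nil _ _) := by
        rw [hL, ← map_getLast_cons Prod.fst]
        exact getLast_eq_of_eq (by simpa using hρf) _
      refine ⟨ρ ++ [(s, {r' | lab r' ∩ Pa = lab s ∩ Pa ∧ ∃ s' ∈ L.2, δ s' r'})], ?_, ?_⟩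
      · rw [chain_concat_iff]
        exact ⟨hρc, ⟨by rw [← hL, hL1]; exact hδ, rfl⟩⟩
      · simp only [List.map_cons, List.map_append] at hρf ⊢
        simp [hρf]
        injection hρf

end


/-- In `Δₐ(M)`, two reachable states `(q,S)` and `(r,R)` satisfy
`(q,S) Γₐ (r,R)` iff `S = R`, where `Γₐ` relates `x` to `y` iff every run ending in `x` has
an a-indistinguishable run ending in `y`. -/
theorem stmt15 {Q P : Type*} (δ : Q → Q → Prop) (q0 : Q) (lab : Q → Set P) (Pa : Set P) :
    let δΔ := deltaDist δ lab Pa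
    let q0Δ : Q × Set Q := (q0, {q0})
    let obsRun : List (Q × Set Q) → List (Set P) :=
      fun ρ => (q0Δ :: ρ).map (fun p => lab p.1 ∩ Pa)
    let endsIn : List (Q × Set Q) → (Q × Set Q) → Prop :=
      fun ρ x => (q0Δ :: ρ).getLast (List.cons_ne_nil _ _) = x
    let Gamma : (Q × Set Q) → (Q × Set Q) → Prop := fun x y =>
      ∀ ρ, List.Chain δΔ q0Δ ρ → endsIn ρ x →
        ∃ ρ', List.Chain δΔ q0Δ ρ' ∧ obsRun ρ = obsRun ρ' ∧ endsIn ρ' y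
    ∀ (q r : Q) (S R : Set Q),
      (∃ ρ, List.Chain δΔ q0Δ ρ ∧ endsIn ρ (q, S)) →
      (∃ ρ, List.Chain δΔ q0Δ ρ ∧ endsIn ρ (r, R)) →
      (Gamma (q, S) (r, R) ↔ S = R) := by
  intro δΔ q0Δ obsRun endsIn Gamma q r S R hq hr
  obtain ⟨ρq, hρqc, hρqe⟩ := hq
  obtain ⟨ρr, hρrc, hρre⟩ := hr
  constructor
  · intro hG
    obtain ⟨ρ', hc', hobs, hend'⟩ := hG ρq hρqc hρqe
    have h1 := dist_invariant δ q0 lab Pa hρqc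
    have h2 := dist_invariant δ q0 lab Pa hc'
    rw [hρqe] at h1
    rw [hend'] at h2
    replace h1 : S = _ := h1
    replace h2 : R = _ := h2
    rw [h1, h2]
    rw [show (((q0, ({q0} : Set Q)) : Q × Set Q) :: ρq).map (fun p => lab p.1 ∩ Pa)
        = (((q0, ({q0} : Set Q)) : Q × Set Q) :: ρ').map (fun p => lab p.1 ∩ Pa) from hobs]
  · intro hSR ρ hc hend
    -- r ∈ R, hence r ∈ S
    have hrR : r ∈ R := by
      have := fst_mem_snd δ q0 lab Pa hρrc
      rw [hρre] at this
      exact this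
    rw [← hSR] at hrR
    -- invariant for ρ : S is the set of endpoints of obs-equal M-runs
    have hinv := dist_invariant δ q0 lab Pa hc
    rw [hend] at hinv
    replace hinv : S = _ := hinv
    rw [hinv] at hrR
    obtain ⟨σ, hσc, hσmap, hσlast⟩ := hrR
    -- lift σ to a Δ-run
    obtain ⟨ρ', hc', hfst⟩ := lift_run δ q0 lab Pa hσc
    have hobs' : obsRun ρ = obsRun ρ' := by
      have : (((q0, ({q0} : Set Q)) : Q × Set Q) :: ρ').map (fun p => lab p.1 ∩ Pa)
          = ((((q0, ({q0} : Set Q)) : Q × Set Q) :: ρ').map Prod.fst).map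
              (fun s => lab s ∩ Pa) := by
        rw [List.map_map]; rfl
      show (((q0, ({q0} : Set Q)) : Q × Set Q) :: ρ).map (fun p => lab p.1 ∩ Pa)
          = (((q0, ({q0} : Set Q)) : Q × Set Q) :: ρ').map (fun p => lab p.1 ∩ Pa)
      rw [this, hfst, hσmap]
    refine ⟨ρ', hc', hobs', ?_⟩
    have hfst' : ((((q0, ({q0} : Set Q)) : Q × Set Q) :: ρ').getLast
        (List.cons_ne_nil _ _)).1 = r := by
      rw [← hσlast, ← map_getLast_cons Prod.fst]
      exact getLast_eq_of_eq (by simpa using hfst) _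
    have hsnd' : ((((q0, ({q0} : Set Q)) : Q × Set Q) :: ρ').getLast
        (List.cons_ne_nil _ _)).2 = R := by
      rw [dist_invariant δ q0 lab Pa hc', ← hSR, hinv]
      have := hobs'
      simp only [obsRun] at this
      rw [← this]
    show (((q0, ({q0} : Set Q)) : Q × Set Q) :: ρ').getLast (List.cons_ne_nil _ _) = (r, R)
    exact Prod.ext hfst' hsnd'
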